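/- Let A be a d×d real symmetric positive semidefinite matrix with eigenvalues σ_1 ≤ σ_2 ≤ ⋯ ≤ σ_d and corresponding orthonormal eigenvectors u_1,…,u_d. Let p, q be real numbers with p² + q² = 1 and set v = p·u_1 + q·u_d. Then the smallest eigenvalue of A + vvᵀ equals min{ σ_2, (1 + σ_1 + σ_d − √((p² − q² + σ_1 − σ_d)² + 4p²q²))/2 }. In particular, if σ_d > σ_1 + p² − q², then the smallest eigenvalue of A + vvᵀ is at least min{σ_2, σ_1 + p² − |pq|}. -/

import Mathlib

open Matrix

private lemma lam_char (a b c : ℝ) :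
    let D := Real.sqrt ((a - c) ^ 2 + 4 * b ^ 2)
    let lam := (a + c - D) / 2
    0 ≤ a - lam ∧ 0 ≤ c - lam ∧ (a - lam) * (c - lam) = b ^ 2 := by
  intro D lam
  have hE : (0:ℝ) ≤ (a - c) ^ 2 + 4 * b ^ 2 := by positivity
  have hD2 : D ^ 2 = (a - c) ^ 2 + 4 * b ^ 2 := Real.sq_sqrt hE
  have hD0 : 0 ≤ D := Real.sqrt_nonneg _
  have h1 : a - c ≤ D := by nlinarith [sq_nonneg b]
  have h2 : c - a ≤ D := by nlinarith [sq_nonneg b]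
  refine ⟨by simp only [lam]; linarith, by simp only [lam]; linarith, ?_⟩
  simp only [lam]
  linear_combination hD2 / 4

private lemma lam_le_quad (a b c α β : ℝ) :
    (a + c - Real.sqrt ((a - c) ^ 2 + 4 * b ^ 2)) / 2 * (α ^ 2 + β ^ 2)
      ≤ a * α ^ 2 + 2 * b * (α * β) + c * β ^ 2 := by
  obtain ⟨h1, h2, h3⟩ := lam_char a b c
  set lam := (a + c - Real.sqrt ((a - c) ^ 2 + 4 * b ^ 2)) / 2 with hlam
  rcases eq_or_lt_of_le h1 with h0 | h0
  · have hb : b = 0 := by nlinarith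
    have hb' : 2 * b * (α * β) = 0 := by rw [hb]; ring
    have h5 : (a - lam) * α ^ 2 = 0 := by rw [← h0]; ring
    have h6 : 0 ≤ (c - lam) * β ^ 2 := mul_nonneg h2 (sq_nonneg β)
    nlinarith [h5, h6, hb']
  · nlinarith [sq_nonneg ((a - lam) * α + b * β), sq_nonneg β]

private lemma lam_exists (a b c : ℝ) :
    ∃ α β : ℝ, α ^ 2 + β ^ 2 = 1 ∧
      a * α ^ 2 + 2 * b * (α * β) + c * β ^ 2
        = (a + c - Real.sqrt ((a - c) ^ 2 + 4 * b ^ 2)) / 2 := by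
  obtain ⟨h1, h2, h3⟩ := lam_char a b c
  set lam := (a + c - Real.sqrt ((a - c) ^ 2 + 4 * b ^ 2)) / 2 with hlam
  by_cases hb : b = 0
  · subst hb
    rcases le_total a c with h | h
    · refine ⟨1, 0, by norm_num, ?_⟩
      have : Real.sqrt ((a - c) ^ 2 + 4 * 0 ^ 2) = c - a := by
        rw [show (a - c) ^ 2 + 4 * 0 ^ 2 = (c - a) ^ 2 by ring, Real.sqrt_sq (by linarith)]
      simp only [hlam, this]; ring
    · refine ⟨0, 1, by norm_num, ?_⟩
      have : Real.sqrt ((a - c) ^ 2 + 4 * 0 ^ 2) = a - c := by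
        rw [show (a - c) ^ 2 + 4 * 0 ^ 2 = (a - c) ^ 2 by ring, Real.sqrt_sq (by linarith)]
      simp only [hlam, this]; ring
  · have hn2 : (0:ℝ) < b ^ 2 + (lam - a) ^ 2 := by positivity
    set n := Real.sqrt (b ^ 2 + (lam - a) ^ 2) with hn
    have hnpos : 0 < n := Real.sqrt_pos.mpr hn2
    have hnsq : n ^ 2 = b ^ 2 + (lam - a) ^ 2 := Real.sq_sqrt hn2.le
    refine ⟨b / n, (lam - a) / n, ?_, ?_⟩
    · field_simp
      linarith [hnsq]
    · have hne : n ≠ 0 := hnpos.ne'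
      have hkey : a * b ^ 2 + 2 * b * (b * (lam - a)) + c * (lam - a) ^ 2 = lam * n ^ 2 := by
        rw [hnsq]; linear_combination (a - lam) * h3
      have hdiv : a * (b / n) ^ 2 + 2 * b * (b / n * ((lam - a) / n)) + c * ((lam - a) / n) ^ 2
          = (a * b ^ 2 + 2 * b * (b * (lam - a)) + c * (lam - a) ^ 2) / n ^ 2 := by
        field_simp
      rw [hdiv, hkey, mul_div_assoc, div_self (by positivity : (n:ℝ) ^ 2 ≠ 0), mul_one]

private lemma lam_le_top (p q s0 sd : ℝ) (hpq : p ^ 2 + q ^ 2 = 1) (h : s0 ≤ sd) :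
    (1 + s0 + sd - Real.sqrt ((p ^ 2 - q ^ 2 + s0 - sd) ^ 2 + 4 * p ^ 2 * q ^ 2)) / 2 ≤ sd := by
  have key : 1 + s0 - sd ≤ Real.sqrt ((p ^ 2 - q ^ 2 + s0 - sd) ^ 2 + 4 * p ^ 2 * q ^ 2) := by
    rcases le_or_gt (1 + s0 - sd) 0 with h3 | h3
    · exact h3.trans (Real.sqrt_nonneg _)
    · have h4 : (1 + s0 - sd) ^ 2 ≤ (p ^ 2 - q ^ 2 + s0 - sd) ^ 2 + 4 * p ^ 2 * q ^ 2 := by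
        nlinarith [mul_nonneg (sq_nonneg q) (sub_nonneg.mpr h)]
      calc 1 + s0 - sd = Real.sqrt ((1 + s0 - sd) ^ 2) := (Real.sqrt_sq h3.le).symm
        _ ≤ _ := Real.sqrt_le_sqrt h4
  linarith

private lemma lam_ge (p q s0 sd : ℝ) (hpq : p ^ 2 + q ^ 2 = 1) (h : s0 + p ^ 2 - q ^ 2 ≤ sd) :
    s0 + p ^ 2 - |p * q|
      ≤ (1 + s0 + sd - Real.sqrt ((p ^ 2 - q ^ 2 + s0 - sd) ^ 2 + 4 * p ^ 2 * q ^ 2)) / 2 := by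
  have hc : 0 ≤ sd + q ^ 2 - s0 - p ^ 2 := by linarith
  have habs : |p * q| ^ 2 = p ^ 2 * q ^ 2 := by rw [sq_abs]; ring
  have key : Real.sqrt ((p ^ 2 - q ^ 2 + s0 - sd) ^ 2 + 4 * p ^ 2 * q ^ 2)
      ≤ (sd + q ^ 2 - s0 - p ^ 2) + 2 * |p * q| := by
    have h4 : (p ^ 2 - q ^ 2 + s0 - sd) ^ 2 + 4 * p ^ 2 * q ^ 2
        ≤ ((sd + q ^ 2 - s0 - p ^ 2) + 2 * |p * q|) ^ 2 := by
      nlinarith [mul_nonneg (abs_nonneg (p * q)) hc]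
    calc Real.sqrt _ ≤ Real.sqrt (((sd + q ^ 2 - s0 - p ^ 2) + 2 * |p * q|) ^ 2) :=
          Real.sqrt_le_sqrt h4
      _ = _ := Real.sqrt_sq (by positivity)
  nlinarith [key, hpq]

private lemma sum_mulVec' {d : ℕ} (F : Fin d → Matrix (Fin d) (Fin d) ℝ) (x : Fin d → ℝ) :
    (∑ i, F i) *ᵥ x = ∑ i, F i *ᵥ x := by
  ext j
  simp only [mulVec, dotProduct, Matrix.sum_apply, Finset.sum_apply, Finset.sum_mul]
  exact Finset.sum_comm

private lemma vecMulVec_mulVec' {d : ℕ} (w x : Fin d → ℝ) :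
    vecMulVec w w *ᵥ x = (w ⬝ᵥ x) • w := by
  ext j
  simp only [mulVec, dotProduct, vecMulVec_apply, Pi.smul_apply, smul_eq_mul, Finset.sum_mul,
    Finset.mul_sum]
  exact Finset.sum_congr rfl fun k _ => by ring

private lemma quadform {d : ℕ} (τ : Fin d → ℝ) (u : Fin d → Fin d → ℝ) (x : Fin d → ℝ) :
    x ⬝ᵥ ((∑ i, τ i • vecMulVec (u i) (u i)) *ᵥ x) = ∑ i, τ i * (u i ⬝ᵥ x) ^ 2 := by
  rw [sum_mulVec']
  have h1 : ∀ i : Fin d, (τ i • vecMulVec (u i) (u i)) *ᵥ x = (τ i * (u i ⬝ᵥ x)) • u i := by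
    intro i
    rw [smul_mulVec, vecMulVec_mulVec', smul_smul]
  simp only [h1]
  have hdsum : x ⬝ᵥ (∑ i, (τ i * (u i ⬝ᵥ x)) • u i) = ∑ i, x ⬝ᵥ ((τ i * (u i ⬝ᵥ x)) • u i) := by
    simp only [dotProduct, Finset.sum_apply, Finset.mul_sum]
    exact Finset.sum_comm
  rw [hdsum]
  exact Finset.sum_congr rfl fun i _ => by
    rw [dotProduct_smul, smul_eq_mul, dotProduct_comm]; ring

private lemma parseval {d : ℕ} (u : Fin d → Fin d → ℝ)
    (horth : ∀ i j, u i ⬝ᵥ u j = if i = j then (1 : ℝ) else 0) (x : Fin d → ℝ) :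
    ∑ i, (u i ⬝ᵥ x) ^ 2 = x ⬝ᵥ x := by
  set U : Matrix (Fin d) (Fin d) ℝ := Matrix.of u with hU
  have hUUt : U * Uᵀ = 1 := by
    ext i j
    simpa [Matrix.mul_apply, Matrix.one_apply, dotProduct, hU] using horth i j
  have hUtU : Uᵀ * U = 1 := mul_eq_one_comm.mp hUUt
  have h2 : ∀ i, u i ⬝ᵥ x = (U *ᵥ x) i := fun i => rfl
  calc ∑ i, (u i ⬝ᵥ x) ^ 2 = (U *ᵥ x) ⬝ᵥ (U *ᵥ x) := by
        simp only [dotProduct, sq]; rfl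
    _ = (x ᵥ* Uᵀ) ⬝ᵥ (U *ᵥ x) := by rw [vecMul_transpose]
    _ = (x ᵥ* (Uᵀ * U)) ⬝ᵥ x := by rw [dotProduct_mulVec, vecMul_vecMul]
    _ = x ⬝ᵥ x := by rw [hUtU, vecMul_one]


private lemma main_lemma {d : ℕ} (hd : 2 ≤ d)
    (σ : Fin d → ℝ) (u : Fin d → Fin d → ℝ)
    (horth : ∀ i j, u i ⬝ᵥ u j = if i = j then (1 : ℝ) else 0)
    (hincr : ∀ i j : Fin d, i ≤ j → σ i ≤ σ j)
    (p q : ℝ) (hpq : p ^ 2 + q ^ 2 = 1)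
    (v : Fin d → ℝ) (i0 i1 ie : Fin d)
    (h0 : (i0 : ℕ) = 0) (h1 : (i1 : ℕ) = 1) (he : (ie : ℕ) = d - 1)
    (hv : v = p • u i0 + q • u ie)
    (σ' : Fin d → ℝ) (u' : Fin d → Fin d → ℝ)
    (horth' : ∀ i j, u' i ⬝ᵥ u' j = if i = j then (1 : ℝ) else 0)
    (hincr' : ∀ i j : Fin d, i ≤ j → σ' i ≤ σ' j)
    (hA' : (∑ i, σ i • vecMulVec (u i) (u i)) + vecMulVec v v
        = ∑ i, σ' i • vecMulVec (u' i) (u' i)) :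
    σ' i0 = min (σ i1)
        ((1 + σ i0 + σ ie
          - Real.sqrt ((p ^ 2 - q ^ 2 + σ i0 - σ ie) ^ 2 + 4 * p ^ 2 * q ^ 2)) / 2) ∧
    (σ ie > σ i0 + p ^ 2 - q ^ 2 →
      min (σ i1) (σ i0 + p ^ 2 - |p * q|) ≤ σ' i0) := by
  have hne0e : i0 ≠ ie := by intro h; apply_fun Fin.val at h; omega
  have h0le : ∀ i : Fin d, i0 ≤ i := fun i => by rw [Fin.le_def, h0]; exact Nat.zero_le _
  set lam := (1 + σ i0 + σ ie
      - Real.sqrt ((p ^ 2 - q ^ 2 + σ i0 - σ ie) ^ 2 + 4 * p ^ 2 * q ^ 2)) / 2 with hlam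
  have hlam_eq : lam = ((σ i0 + p ^ 2) + (σ ie + q ^ 2)
      - Real.sqrt (((σ i0 + p ^ 2) - (σ ie + q ^ 2)) ^ 2 + 4 * (p * q) ^ 2)) / 2 := by
    rw [hlam,
      show ((σ i0 + p ^ 2) - (σ ie + q ^ 2)) ^ 2 + 4 * (p * q) ^ 2
        = (p ^ 2 - q ^ 2 + σ i0 - σ ie) ^ 2 + 4 * p ^ 2 * q ^ 2 from by ring,
      show (σ i0 + p ^ 2) + (σ ie + q ^ 2) = 1 + σ i0 + σ ie from by rw [← hpq]; ring]
  -- quadratic-form identity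
  have hR : ∀ x : Fin d → ℝ, ∑ i, σ' i * (u' i ⬝ᵥ x) ^ 2
      = (∑ i, σ i * (u i ⬝ᵥ x) ^ 2) + (v ⬝ᵥ x) ^ 2 := by
    intro x
    rw [← quadform σ' u' x, ← hA', add_mulVec, dotProduct_add, quadform σ u x]
    congr 1
    rw [vecMulVec_mulVec', dotProduct_smul, smul_eq_mul, dotProduct_comm x v, pow_two]
  -- Rayleigh lower bound for σ' i0
  have hmin : ∀ x : Fin d → ℝ, σ' i0 * (x ⬝ᵥ x) ≤ ∑ i, σ' i * (u' i ⬝ᵥ x) ^ 2 := by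
    intro x
    rw [← parseval u' horth' x, Finset.mul_sum]
    exact Finset.sum_le_sum fun i _ =>
      mul_le_mul_of_nonneg_right (hincr' i0 i (h0le i)) (sq_nonneg _)
  have hattain : ∑ i, σ' i * (u' i ⬝ᵥ u' i0) ^ 2 = σ' i0 := by
    rw [Finset.sum_eq_single i0]
    · rw [horth' i0 i0]; simp
    · intro i _ hi; rw [horth' i i0, if_neg hi]; ring
    · simp
  set S : Finset (Fin d) := (Finset.univ.erase i0).erase ie with hS
  have hsplit : ∀ f : Fin d → ℝ, ∑ i, f i = f i0 + f ie + ∑ i ∈ S, f i := by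
    intro f
    rw [← Finset.add_sum_erase _ f (Finset.mem_univ i0),
      ← Finset.add_sum_erase _ f
        (Finset.mem_erase.mpr ⟨Ne.symm hne0e, Finset.mem_univ ie⟩)]
    ring
  have hmem : ∀ i ∈ S, i1 ≤ i := by
    intro i hi
    rw [hS, Finset.mem_erase, Finset.mem_erase] at hi
    obtain ⟨hie', hi0', -⟩ := hi
    have hval : (i : ℕ) ≠ 0 := fun h => hi0' (Fin.ext (by omega))
    rw [Fin.le_def, h1]; omega
  have hdot : ∀ (α β : ℝ) (i : Fin d),
      u i ⬝ᵥ (α • u i0 + β • u ie)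
        = (if i = i0 then α else 0) + (if i = ie then β else 0) := by
    intro α β i
    rw [dotProduct_add, dotProduct_smul, dotProduct_smul, horth i i0, horth i ie,
      smul_eq_mul, smul_eq_mul]
    split_ifs <;> ring
  -- lower bound on quadratic form
  have hlow : ∀ x : Fin d → ℝ, min (σ i1) lam * (x ⬝ᵥ x)
      ≤ (∑ i, σ i * (u i ⬝ᵥ x) ^ 2) + (v ⬝ᵥ x) ^ 2 := by
    intro x
    have hvx : v ⬝ᵥ x = p * (u i0 ⬝ᵥ x) + q * (u ie ⬝ᵥ x) := by
      rw [hv, add_dotProduct, smul_dotProduct, smul_dotProduct, smul_eq_mul, smul_eq_mul]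
    have hquad := lam_le_quad (σ i0 + p ^ 2) (p * q) (σ ie + q ^ 2)
      (u i0 ⬝ᵥ x) (u ie ⬝ᵥ x)
    rw [← hlam_eq] at hquad
    have hsplitσ : (∑ i, σ i * (u i ⬝ᵥ x) ^ 2)
        = σ i0 * (u i0 ⬝ᵥ x) ^ 2 + σ ie * (u ie ⬝ᵥ x) ^ 2
          + ∑ i ∈ S, σ i * (u i ⬝ᵥ x) ^ 2 := hsplit _
    have hparse2 : (u i0 ⬝ᵥ x) ^ 2 + (u ie ⬝ᵥ x) ^ 2 + ∑ i ∈ S, (u i ⬝ᵥ x) ^ 2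
        = x ⬝ᵥ x := by
      rw [← parseval u horth x]; exact (hsplit fun i => (u i ⬝ᵥ x) ^ 2).symm
    have hrest : min (σ i1) lam * (∑ i ∈ S, (u i ⬝ᵥ x) ^ 2)
        ≤ ∑ i ∈ S, σ i * (u i ⬝ᵥ x) ^ 2 := by
      rw [Finset.mul_sum]
      exact Finset.sum_le_sum fun i hi =>
        mul_le_mul_of_nonneg_right ((min_le_left _ _).trans (hincr i1 i (hmem i hi)))
          (sq_nonneg _)
    have hm1 : min (σ i1) lam * ((u i0 ⬝ᵥ x) ^ 2 + (u ie ⬝ᵥ x) ^ 2)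
        ≤ lam * ((u i0 ⬝ᵥ x) ^ 2 + (u ie ⬝ᵥ x) ^ 2) :=
      mul_le_mul_of_nonneg_right (min_le_right _ _) (by positivity)
    calc min (σ i1) lam * (x ⬝ᵥ x)
        = min (σ i1) lam * ((u i0 ⬝ᵥ x) ^ 2 + (u ie ⬝ᵥ x) ^ 2)
          + min (σ i1) lam * (∑ i ∈ S, (u i ⬝ᵥ x) ^ 2) := by rw [← hparse2]; ring
      _ ≤ lam * ((u i0 ⬝ᵥ x) ^ 2 + (u ie ⬝ᵥ x) ^ 2)
          + ∑ i ∈ S, σ i * (u i ⬝ᵥ x) ^ 2 := add_le_add hm1 hrest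
      _ ≤ ((σ i0 + p ^ 2) * (u i0 ⬝ᵥ x) ^ 2
            + 2 * (p * q) * ((u i0 ⬝ᵥ x) * (u ie ⬝ᵥ x))
            + (σ ie + q ^ 2) * (u ie ⬝ᵥ x) ^ 2)
          + ∑ i ∈ S, σ i * (u i ⬝ᵥ x) ^ 2 := add_le_add_left hquad _
      _ = (∑ i, σ i * (u i ⬝ᵥ x) ^ 2) + (v ⬝ᵥ x) ^ 2 := by rw [hsplitσ, hvx]; ring
  have hlower : min (σ i1) lam ≤ σ' i0 := by
    have h := hlow (u' i0)
    rw [← hR (u' i0), hattain] at h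
    have hunit : u' i0 ⬝ᵥ u' i0 = 1 := by rw [horth' i0 i0]; simp
    rwa [hunit, mul_one] at h
  have hup_lam : σ' i0 ≤ lam := by
    obtain ⟨α, β, hαβ, hval⟩ := lam_exists (σ i0 + p ^ 2) (p * q) (σ ie + q ^ 2)
    rw [← hlam_eq] at hval
    set x := α • u i0 + β • u ie with hx
    have hd0 : u i0 ⬝ᵥ x = α := by rw [hx, hdot]; simp [hne0e]
    have hde : u ie ⬝ᵥ x = β := by rw [hx, hdot]; simp [Ne.symm hne0e]
    have hSzero : ∀ i ∈ S, u i ⬝ᵥ x = 0 := by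
      intro i hi
      rw [hS, Finset.mem_erase, Finset.mem_erase] at hi
      rw [hx, hdot, if_neg hi.2.1, if_neg hi.1, add_zero]
    have hxx : x ⬝ᵥ x = 1 := by
      rw [← parseval u horth x]
      have h5 : (∑ i, (u i ⬝ᵥ x) ^ 2)
          = (u i0 ⬝ᵥ x) ^ 2 + (u ie ⬝ᵥ x) ^ 2 + ∑ i ∈ S, (u i ⬝ᵥ x) ^ 2 := hsplit _
      rw [h5, hd0, hde,
        Finset.sum_eq_zero (fun i hi => by rw [hSzero i hi]; ring), add_zero, hαβ]
    have hsum : (∑ i, σ i * (u i ⬝ᵥ x) ^ 2) = σ i0 * α ^ 2 + σ ie * β ^ 2 := by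
      have h5 : (∑ i, σ i * (u i ⬝ᵥ x) ^ 2)
          = σ i0 * (u i0 ⬝ᵥ x) ^ 2 + σ ie * (u ie ⬝ᵥ x) ^ 2
            + ∑ i ∈ S, σ i * (u i ⬝ᵥ x) ^ 2 := hsplit _
      rw [h5, hd0, hde,
        Finset.sum_eq_zero (fun i hi => by rw [hSzero i hi]; ring), add_zero]
    have hvx : v ⬝ᵥ x = p * α + q * β := by
      rw [hv, add_dotProduct, smul_dotProduct, smul_dotProduct, smul_eq_mul, smul_eq_mul,
        hd0, hde]
    have hRx : ∑ i, σ' i * (u' i ⬝ᵥ x) ^ 2 = lam := by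
      rw [hR x, hsum, hvx]
      linear_combination hval
    have h := hmin x
    rwa [hxx, mul_one, hRx] at h
  have hup_1 : σ' i0 ≤ σ i1 := by
    rcases eq_or_lt_of_le hd with hd2 | hd3
    · have h1e : i1 = ie := Fin.ext (by omega)
      rw [h1e]
      exact hup_lam.trans
        (by rw [hlam]; exact lam_le_top p q (σ i0) (σ ie) hpq (hincr i0 ie (h0le ie)))
    · have hne01 : i0 ≠ i1 := by intro h; apply_fun Fin.val at h; omega
      have hne1e : ie ≠ i1 := by intro h; apply_fun Fin.val at h; omega
      have h := hmin (u i1)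
      have hunit : u i1 ⬝ᵥ u i1 = 1 := by rw [horth i1 i1]; simp
      have hRu1 : ∑ i, σ' i * (u' i ⬝ᵥ u i1) ^ 2 = σ i1 := by
        rw [hR]
        have hv1 : v ⬝ᵥ u i1 = 0 := by
          rw [hv, add_dotProduct, smul_dotProduct, smul_dotProduct, smul_eq_mul, smul_eq_mul,
            horth i0 i1, horth ie i1, if_neg hne01, if_neg hne1e]
          ring
        have hsum1 : (∑ i, σ i * (u i ⬝ᵥ u i1) ^ 2) = σ i1 := by
          rw [Finset.sum_eq_single i1]
          · rw [horth i1 i1]; simp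
          · intro i _ hi; rw [horth i i1, if_neg hi]; ring
          · simp
        rw [hsum1, hv1]; ring
      rwa [hunit, mul_one, hRu1] at h
  constructor
  · exact le_antisymm (le_min hup_1 hup_lam) hlower
  · intro hgt
    have hge := lam_ge p q (σ i0) (σ ie) hpq (by linarith)
    have h2 : min (σ i1) (σ i0 + p ^ 2 - |p * q|) ≤ min (σ i1) lam :=
      min_le_min le_rfl (by rw [hlam]; exact hge)
    exact h2.trans hlower

/-- Smallest eigenvalue of a rank-one update along the extreme eigenvectors:
with eigenvalues in nondecreasing order and `v = p u₁ + q u_d` (`p² + q² = 1`),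
the smallest eigenvalue of `A + vvᵀ` equals
`min (σ 1) ((1 + σ 0 + σ (d-1) - √((p² - q² + σ 0 - σ (d-1))² + 4p²q²))/2)`
(0-based indices); in particular if `σ (d-1) > σ 0 + p² - q²` it is at least
`min (σ 1) (σ 0 + p² - |pq|)`. -/
theorem stmt14 (d : ℕ) (hd : 2 ≤ d)
    (A : Matrix (Fin d) (Fin d) ℝ)
    (σ : Fin d → ℝ) (u : Fin d → Fin d → ℝ)
    (horth : ∀ i j, u i ⬝ᵥ u j = if i = j then (1 : ℝ) else 0)
    (hincr : ∀ i j : Fin d, i ≤ j → σ i ≤ σ j)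
    (hnonneg : ∀ i, 0 ≤ σ i)
    (hA : A = ∑ i, σ i • vecMulVec (u i) (u i))
    (p q : ℝ) (hpq : p ^ 2 + q ^ 2 = 1)
    (v : Fin d → ℝ)
    (hv : v = p • u ⟨0, by omega⟩ + q • u ⟨d - 1, by omega⟩)
    (σ' : Fin d → ℝ) (u' : Fin d → Fin d → ℝ)
    (horth' : ∀ i j, u' i ⬝ᵥ u' j = if i = j then (1 : ℝ) else 0)
    (hincr' : ∀ i j : Fin d, i ≤ j → σ' i ≤ σ' j)
    (hA' : A + vecMulVec v v = ∑ i, σ' i • vecMulVec (u' i) (u' i)) :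
    σ' ⟨0, by omega⟩
      = min (σ ⟨1, by omega⟩)
          ((1 + σ ⟨0, by omega⟩ + σ ⟨d - 1, by omega⟩
            - Real.sqrt ((p ^ 2 - q ^ 2 + σ ⟨0, by omega⟩ - σ ⟨d - 1, by omega⟩) ^ 2
                + 4 * p ^ 2 * q ^ 2)) / 2) ∧
    (σ ⟨d - 1, by omega⟩ > σ ⟨0, by omega⟩ + p ^ 2 - q ^ 2 →
      min (σ ⟨1, by omega⟩) (σ ⟨0, by omega⟩ + p ^ 2 - |p * q|) ≤ σ' ⟨0, by omega⟩) := by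
  rw [hA] at hA'
  exact main_lemma hd σ u horth hincr p q hpq v ⟨0, by omega⟩ ⟨1, by omega⟩ ⟨d - 1, by omega⟩
    rfl rfl rfl hv σ' u' horth' hincr' hA'
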